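/- For v ∈ ℍ define σ(v) : ℍ → ℍ by σ(v)(x) = v x v*. Then: (i) if x is a paravector then σ(v)(x) is a paravector; (ii) σ(v)(k) = |v|² k; (iii) if v = r·exp(uθ) with r, θ real and u a unit imaginary quaternion, then σ(v)(−uk) = |v|² (−uk). (Thus σ(v) preserves the splitting ℍ = $ℝ³ ⊕ ℝk, acting on ℝk by multiplication by |v|², and on $ℝ³ fixing the axis −uk up to the factor |v|².) -/

import Mathlib

open Quaternion

noncomputable section

/-- The involution `q* = a + bi + cj - dk` on quaternions (Clifford reversion). -/
def qstar (q : ℍ[ℝ]) : ℍ[ℝ] := ⟨q.re, q.imI, q.imJ, -q.imK⟩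

/-- The involution `q' = a - bi - cj + dk` on quaternions. -/
def qprime (q : ℍ[ℝ]) : ℍ[ℝ] := ⟨q.re, -q.imI, -q.imJ, q.imK⟩

/-- A paravector is an element of `ℝ + ℝi + ℝj`, i.e. a quaternion with zero `k`-component. -/
def IsParavector (q : ℍ[ℝ]) : Prop := q.imK = 0

/-- The quaternion `k`. -/
def qk : ℍ[ℝ] := ⟨0, 0, 0, 1⟩

/-- A quaternionic spinor: a pair `(ξ, η) ≠ (0,0)` with `ξ * conj η` a paravector. -/
def IsSpinor (κ : ℍ[ℝ] × ℍ[ℝ]) : Prop := κ ≠ 0 ∧ IsParavector (κ.1 * star κ.2)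

/-- The bracket `{κ₁, κ₂} = ξ₁* η₂ − η₁* ξ₂`. -/
def bracket (κ₁ κ₂ : ℍ[ℝ] × ℍ[ℝ]) : ℍ[ℝ] := qstar κ₁.1 * κ₂.2 - qstar κ₁.2 * κ₂.1

/-- Right multiplication `κ x = (ξ x, η x)`. -/
def rmul (κ : ℍ[ℝ] × ℍ[ℝ]) (x : ℍ[ℝ]) : ℍ[ℝ] × ℍ[ℝ] := (κ.1 * x, κ.2 * x)

/-- The complementary pair `κ̌ = (η', −ξ')`. -/
def qcheck (κ : ℍ[ℝ] × ℍ[ℝ]) : ℍ[ℝ] × ℍ[ℝ] := (qprime κ.2, -qprime κ.1)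

/-- The real inner product on `ℍ²`: `⟨κ₁, κ₂⟩ = Re (ξ₁ ξ̄₂ + η₁ η̄₂)`. -/
def qinner (κ₁ κ₂ : ℍ[ℝ] × ℍ[ℝ]) : ℝ := (κ₁.1 * star κ₂.1 + κ₁.2 * star κ₂.2).re

/-- The squared norm `|κ|² = |ξ|² + |η|²` on `ℍ²`. -/
def qnsq (κ : ℍ[ℝ] × ℍ[ℝ]) : ℝ := Quaternion.normSq κ.1 + Quaternion.normSq κ.2

/-- The quaternionic exponential `exp (u θ) = cos θ + (sin θ) u` for `u` unit imaginary. -/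
def qexp (u : ℍ[ℝ]) (θ : ℝ) : ℍ[ℝ] := ((Real.cos θ : ℝ) : ℍ[ℝ]) + Real.sin θ • u

/-- The map `σ(v)(x) = v x v*`. -/
def qsigma (v x : ℍ[ℝ]) : ℍ[ℝ] := v * x * qstar v


@[simp] lemma qstar_re (q : ℍ[ℝ]) : (qstar q).re = q.re := rfl
@[simp] lemma qstar_imI (q : ℍ[ℝ]) : (qstar q).imI = q.imI := rfl
@[simp] lemma qstar_imJ (q : ℍ[ℝ]) : (qstar q).imJ = q.imJ := rfl
@[simp] lemma qstar_imK (q : ℍ[ℝ]) : (qstar q).imK = -q.imK := rfl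
@[simp] lemma qk_re : qk.re = 0 := rfl
@[simp] lemma qk_imI : qk.imI = 0 := rfl
@[simp] lemma qk_imJ : qk.imJ = 0 := rfl
@[simp] lemma qk_imK : qk.imK = 1 := rfl

/-- Properties of `σ(v)(x) = v x v*`:
(i) it preserves paravectors; (ii) `σ(v)(k) = |v|² k`;
(iii) if `v = r exp(uθ)` with `u` unit imaginary then `σ(v)(−uk) = |v|² (−uk)`. -/
theorem sigma_properties (v : ℍ[ℝ]) :
    (∀ x : ℍ[ℝ], IsParavector x → IsParavector (qsigma v x)) ∧
    (qsigma v qk = Quaternion.normSq v • qk) ∧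
    (∀ (r θ : ℝ) (u : ℍ[ℝ]), u.re = 0 → Quaternion.normSq u = 1 → v = r • qexp u θ →
      qsigma v (-(u * qk)) = Quaternion.normSq v • (-(u * qk))) := by
  refine ⟨?_, ?_, ?_⟩
  · intro x hx
    simp only [IsParavector, qsigma] at hx ⊢
    simp only [Quaternion.imK_mul, Quaternion.re_mul, Quaternion.imI_mul, Quaternion.imJ_mul, qstar_re, qstar_imI, qstar_imJ, qstar_imK]
    rw [hx]; ring
  · simp only [qsigma, Quaternion.normSq_def']
    ext <;> simp [Quaternion.re_mul, Quaternion.imI_mul, Quaternion.imJ_mul, Quaternion.imK_mul] <;> ring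
  · rintro r θ u hre hns rfl
    simp only [Quaternion.normSq_def', hre] at hns
    simp only [qsigma, qexp, Quaternion.normSq_def']
    ext <;> simp [Quaternion.re_mul, Quaternion.imI_mul, Quaternion.imJ_mul, Quaternion.imK_mul, Quaternion.re_smul, Quaternion.imI_smul, Quaternion.imJ_smul, Quaternion.imK_smul, Quaternion.re_coe, hre] <;> nlinarith [hns, Real.sin_sq_add_cos_sq θ, sq_nonneg r]
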